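/- Let A, B be linear operators in a Hilbert space with dom(A) ⊆ dom(B) and 0 ∉ W_e(B). Then w_e(A,B) ⊆ ⋂_{K compact} closure( w(A + K, B) ), the intersection over all compact K ∈ L(H). -/

import Mathlib

open Filter Topology

variable {H : Type*} [NormedAddCommGroup H] [InnerProductSpace ℂ H] [CompleteSpace H]

/-- The numerical range of (the restriction to the domain `d` of) a linear operator `T`. -/
def numRange (T : H →ₗ[ℂ] H) (d : Submodule ℂ H) : Set ℂ :=
  {z | ∃ x ∈ d, ‖x‖ = 1 ∧ z = (inner ℂ (T x) x : ℂ)}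

/-- The pencil numerical range `W(A,B) = {λ : 0 ∈ closure (W(A - λB))}`. -/
def pencilW (A B : H →ₗ[ℂ] H) (dA : Submodule ℂ H) : Set ℂ :=
  {lam : ℂ | (0 : ℂ) ∈ closure (numRange (A - lam • B) dA)}

/-- The pencil numerical range `w(A,B) = {⟨Ax,x⟩/⟨Bx,x⟩ : x ∈ dom A, ⟨Bx,x⟩ ≠ 0}`. -/
def pencilw (A B : H →ₗ[ℂ] H) (dA : Submodule ℂ H) : Set ℂ :=
  {lam : ℂ | ∃ x ∈ dA, (inner ℂ (B x) x : ℂ) ≠ 0 ∧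
    lam = (inner ℂ (A x) x : ℂ) / (inner ℂ (B x) x : ℂ)}

/-- The essential numerical range of an operator `T` with domain `d`, via weakly null
normalized sequences. -/
def essNumRange (T : H →ₗ[ℂ] H) (d : Submodule ℂ H) : Set ℂ :=
  {z | ∃ x : ℕ → H, (∀ n, x n ∈ d) ∧ (∀ n, ‖x n‖ = 1) ∧
    (∀ y : H, Tendsto (fun n => (inner ℂ y (x n) : ℂ)) atTop (𝓝 0)) ∧
    Tendsto (fun n => (inner ℂ (T (x n)) (x n) : ℂ)) atTop (𝓝 z)}

/-- The pencil essential numerical range `W_e(A,B) = {λ : 0 ∈ W_e(A - λB)}`. -/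
def pencilWe (A B : H →ₗ[ℂ] H) (dA : Submodule ℂ H) : Set ℂ :=
  {lam : ℂ | (0 : ℂ) ∈ essNumRange (A - lam • B) dA}

/-- The pencil essential numerical range `w_e(A,B)`. -/
def pencilwe (A B : H →ₗ[ℂ] H) (dA : Submodule ℂ H) : Set ℂ :=
  {lam : ℂ | ∃ x : ℕ → H, (∀ n, x n ∈ dA) ∧ (∀ n, ‖x n‖ = 1) ∧
    (∀ y : H, Tendsto (fun n => (inner ℂ y (x n) : ℂ)) atTop (𝓝 0)) ∧
    (∀ n, (inner ℂ (B (x n)) (x n) : ℂ) ≠ 0) ∧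
    Tendsto (fun n => (inner ℂ (A (x n)) (x n) : ℂ) / (inner ℂ (B (x n)) (x n) : ℂ))
      atTop (𝓝 lam)}

/-- A compact operator maps a weakly null normalized sequence to a norm-null sequence. -/
theorem compact_apply_weaknull (K : H →L[ℂ] H) (hK : IsCompactOperator K)
    (x : ℕ → H) (hxn : ∀ n, ‖x n‖ = 1)
    (hweak : ∀ y : H, Tendsto (fun n => (inner ℂ y (x n) : ℂ)) atTop (𝓝 0)) :
    Tendsto (fun n => K (x n)) atTop (𝓝 0) := by
  obtain ⟨C, hC, hsub⟩ := hK.image_ball_subset_compact (𝕜₁ := ℂ) (f := (K : H →ₗ[ℂ] H)) 2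
  have hmem : ∀ n, K (x n) ∈ C := fun n =>
    hsub ⟨x n, by simp [Metric.mem_ball, hxn n], rfl⟩
  apply tendsto_of_subseq_tendsto
  intro ns hns
  obtain ⟨y, -, ms, hms, hy⟩ := hC.tendsto_subseq (fun n => hmem (ns n))
  have hzy : ∀ z : H, (inner ℂ z y : ℂ) = 0 := by
    intro z
    have h1 : Tendsto (fun n => (inner ℂ z (K (x (ns (ms n)))) : ℂ)) atTop (𝓝 (inner ℂ z y)) :=
      (Tendsto.inner tendsto_const_nhds hy)
    have h2 : Tendsto (fun n => (inner ℂ (ContinuousLinearMap.adjoint K z) (x n) : ℂ)) atTop (𝓝 0) :=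
      hweak _
    have h3 : Tendsto (fun n => (inner ℂ z (K (x (ns (ms n)))) : ℂ)) atTop (𝓝 0) := by
      have := h2.comp (hns.comp hms.tendsto_atTop)
      simpa [ContinuousLinearMap.adjoint_inner_left, Function.comp_def] using this
    exact tendsto_nhds_unique h1 h3
  have hy0 : y = 0 := by
    have := hzy y
    rwa [inner_self_eq_zero] at this
  exact ⟨ms, by rwa [hy0] at hy⟩

/-- If `0 ∉ W_e(B)`, then `w_e(A,B) ⊆ ⋂_{K compact} closure (w(A + K, B))`. -/
theorem stmt_14 (A B : H →ₗ[ℂ] H) (dA dB : Submodule ℂ H) (hAB : dA ≤ dB)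
    (h0 : (0 : ℂ) ∉ essNumRange B dB) :
    pencilwe A B dA ⊆
      ⋂ K ∈ {K : H →L[ℂ] H | IsCompactOperator K},
        closure (pencilw (A + (K : H →ₗ[ℂ] H)) B dA) := by
  intro lam hlam
  obtain ⟨x, hxdA, hxn, hweak, hBne, hlim⟩ := hlam
  simp only [Set.mem_iInter, Set.mem_setOf_eq]
  intro K hK
  set b : ℕ → ℂ := fun n => (inner ℂ (B (x n)) (x n) : ℂ) with hb
  -- lower bound on ‖b n‖ eventually
  have hlow : ∃ c > 0, ∀ᶠ n in atTop, c ≤ ‖b n‖ := by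
    by_contra hc
    push_neg at hc
    have hfreq : ∀ m : ℕ, ∃ᶠ k in atTop, ‖b k‖ < 1 / (m + 1) := by
      intro m
      have := hc (1 / (m + 1)) (by positivity)
      simpa [not_le] using this
    obtain ⟨φ, hφmono, hφ⟩ := Filter.extraction_forall_of_frequently (by
      intro n; exact (hfreq n).mono (fun k hk => hk))
    apply h0
    refine ⟨fun n => x (φ n), fun n => hAB (hxdA (φ n)), fun n => hxn (φ n),
      fun y => (hweak y).comp hφmono.tendsto_atTop, ?_⟩
    rw [tendsto_zero_iff_norm_tendsto_zero]
    exact squeeze_zero (fun n => norm_nonneg _) (fun n => (hφ n).le)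
      tendsto_one_div_add_atTop_nhds_zero_nat
  obtain ⟨c, hcpos, hcev⟩ := hlow
  -- K x n → 0 in norm, hence ⟨K x n, x n⟩ → 0
  have hKx : Tendsto (fun n => K (x n)) atTop (𝓝 0) :=
    compact_apply_weaknull K hK x hxn hweak
  have hKinner : Tendsto (fun n => (inner ℂ (K (x n)) (x n) : ℂ)) atTop (𝓝 0) := by
    rw [tendsto_zero_iff_norm_tendsto_zero]
    apply squeeze_zero (fun n => norm_nonneg _) (fun n => ?_)
      (by simpa using (tendsto_zero_iff_norm_tendsto_zero.1 hKx))
    calc ‖(inner ℂ (K (x n)) (x n) : ℂ)‖ ≤ ‖K (x n)‖ * ‖x n‖ := norm_inner_le_norm _ _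
      _ = ‖K (x n)‖ := by rw [hxn n, mul_one]
  have hq : Tendsto (fun n => (inner ℂ (K (x n)) (x n) : ℂ) / b n) atTop (𝓝 0) := by
    simp only [div_eq_mul_inv]
    apply hKinner.zero_mul_isBoundedUnder_le
    refine isBoundedUnder_of_eventually_le (a := c⁻¹) ?_
    filter_upwards [hcev] with n hn
    simp only [Function.comp_apply, norm_inv]
    exact inv_anti₀ hcpos hn
  have hfinal : Tendsto
      (fun n => (inner ℂ ((A + (K : H →ₗ[ℂ] H)) (x n)) (x n) : ℂ) / b n) atTop (𝓝 lam) := by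
    have : (fun n => (inner ℂ ((A + (K : H →ₗ[ℂ] H)) (x n)) (x n) : ℂ) / b n)
        = fun n => (inner ℂ (A (x n)) (x n) : ℂ) / b n + (inner ℂ (K (x n)) (x n) : ℂ) / b n := by
      funext n
      rw [← add_div]
      congr 1
      simp [inner_add_left]
    rw [this]
    simpa using hlim.add hq
  refine mem_closure_of_tendsto hfinal (Eventually.of_forall fun n => ?_)
  exact ⟨x n, hxdA n, hBne n, rfl⟩
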